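/- Let n ≥ 2, σ ∈ (0,1], and let u ∈ C(closure(B₁)) be harmonic in the unit ball B₁ ⊂ ℝ^d (any dimension d ≥ 2) with boundary values g ∈ C^{0,σ}(∂B₁). Then u ∈ C^{0,σ/2}(closure(B₁)) with ‖u‖_{C^{0,σ/2}(closure(B₁))} ≤ 2d·5^σ·‖g‖_{C^{0,σ}(∂B₁)}. -/

import Mathlib

open Metric

noncomputable def lap {d : ℕ} (f : EuclideanSpace ℝ (Fin d) → ℝ)
    (x : EuclideanSpace ℝ (Fin d)) : ℝ :=
  ∑ i, fderiv ℝ (fun y => fderiv ℝ f y (EuclideanSpace.single i 1)) x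
    (EuclideanSpace.single i 1)

variable {d : ℕ}

local notation "E" => EuclideanSpace ℝ (Fin d)

lemma lap_congr {f g : E → ℝ} {x : E} (h : f =ᶠ[nhds x] g) : lap f x = lap g x := by
  unfold lap
  refine Finset.sum_congr rfl fun i _ => ?_
  have h1 : (fun y => fderiv ℝ f y (EuclideanSpace.single i 1)) =ᶠ[nhds x]
      (fun y => fderiv ℝ g y (EuclideanSpace.single i 1)) := by
    filter_upwards [h.fderiv (𝕜 := ℝ)] with y hy using by rw [hy]
  rw [h1.fderiv_eq]

lemma lap_const_add (a : ℝ) (f : E → ℝ) (x : E) : lap (fun y => a + f y) x = lap f x := by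
  unfold lap
  refine Finset.sum_congr rfl fun i _ => ?_
  have : (fun y => fderiv ℝ (fun z => a + f z) y (EuclideanSpace.single i 1)) =
      (fun y => fderiv ℝ f y (EuclideanSpace.single i 1)) := by
    funext y; rw [fderiv_const_add]
  rw [this]

lemma lap_neg (f : E → ℝ) (x : E) : lap (fun y => -f y) x = -lap f x := by
  unfold lap
  rw [← Finset.sum_neg_distrib]
  refine Finset.sum_congr rfl fun i _ => ?_
  have : (fun y => fderiv ℝ (fun z => -f z) y (EuclideanSpace.single i 1)) =
      (fun y => -(fderiv ℝ f y (EuclideanSpace.single i 1))) := by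
    funext y; rw [fderiv_fun_neg]; rfl
  rw [this, fderiv_fun_neg]
  rfl

lemma diffAt_fderiv_apply {f : E → ℝ} {s : Set (EuclideanSpace ℝ (Fin d))} (hs : IsOpen s)
    (hf : ContDiffOn ℝ 2 f s) {x : E} (hx : x ∈ s) (v : E) :
    DifferentiableAt ℝ (fun y => fderiv ℝ f y v) x := by
  have h1 : ContDiffAt ℝ 2 f x := hf.contDiffAt (hs.mem_nhds hx)
  have h2 : ContDiffAt ℝ 1 (fderiv ℝ f) x := h1.fderiv_right (by norm_num)
  have h3 : DifferentiableAt ℝ (fderiv ℝ f) x := h2.differentiableAt one_ne_zero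
  exact (ContinuousLinearMap.apply ℝ ℝ v).differentiableAt.comp x h3

lemma fderiv_apply_eventually_add {f g : E → ℝ} {s : Set (EuclideanSpace ℝ (Fin d))}
    (hs : IsOpen s) (hf : ContDiffOn ℝ 2 f s) (hg : ContDiffOn ℝ 2 g s) {x : E} (hx : x ∈ s)
    (v : E) :
    (fun y => fderiv ℝ (fun z => f z + g z) y v) =ᶠ[nhds x]
      (fun y => fderiv ℝ f y v + fderiv ℝ g y v) := by
  filter_upwards [hs.mem_nhds hx] with y hy
  have hfd : DifferentiableAt ℝ f y :=
    (hf.contDiffAt (hs.mem_nhds hy)).differentiableAt two_ne_zero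
  have hgd : DifferentiableAt ℝ g y :=
    (hg.contDiffAt (hs.mem_nhds hy)).differentiableAt two_ne_zero
  rw [fderiv_fun_add hfd hgd]; rfl

lemma lap_add {f g : E → ℝ} {s : Set (EuclideanSpace ℝ (Fin d))} (hs : IsOpen s)
    (hf : ContDiffOn ℝ 2 f s) (hg : ContDiffOn ℝ 2 g s) {x : E} (hx : x ∈ s) :
    lap (fun y => f y + g y) x = lap f x + lap g x := by
  unfold lap
  rw [← Finset.sum_add_distrib]
  refine Finset.sum_congr rfl fun i _ => ?_
  set v := EuclideanSpace.single (𝕜 := ℝ) i (1 : ℝ)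
  rw [(fderiv_apply_eventually_add hs hf hg hx v).fderiv_eq,
    fderiv_fun_add (diffAt_fderiv_apply hs hf hx v) (diffAt_fderiv_apply hs hg hx v)]
  rfl

lemma lap_const_mul {f : E → ℝ} {s : Set (EuclideanSpace ℝ (Fin d))} (hs : IsOpen s)
    (hf : ContDiffOn ℝ 2 f s) {x : E} (hx : x ∈ s) (c : ℝ) :
    lap (fun y => c * f y) x = c * lap f x := by
  unfold lap
  rw [Finset.mul_sum]
  refine Finset.sum_congr rfl fun i _ => ?_
  set v := EuclideanSpace.single (𝕜 := ℝ) i (1 : ℝ)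
  have h1 : (fun y => fderiv ℝ (fun z => c * f z) y v) =ᶠ[nhds x]
      (fun y => c * fderiv ℝ f y v) := by
    filter_upwards [hs.mem_nhds hx] with y hy
    have hfd : DifferentiableAt ℝ f y :=
      (hf.contDiffAt (hs.mem_nhds hy)).differentiableAt two_ne_zero
    rw [fderiv_const_mul hfd]; rfl
  rw [h1.fderiv_eq, fderiv_const_mul (diffAt_fderiv_apply hs hf hx v)]; rfl

lemma lap_normSq (x : E) : lap (fun y : E => inner ℝ y y) x = 2 * d := by
  have h1 : ∀ i : Fin d, (fun y : E => fderiv ℝ (fun z : E => inner ℝ z z) y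
      (EuclideanSpace.single i 1)) = fun y : E => 2 * y i := by
    intro i; funext y
    rw [fderiv_inner_apply ℝ differentiableAt_fun_id differentiableAt_fun_id]
    simp [EuclideanSpace.inner_single_right, EuclideanSpace.inner_single_left, real_inner_comm]
    ring
  unfold lap
  have h2 : ∀ i : Fin d, fderiv ℝ (fun y : E => fderiv ℝ (fun z : E => inner ℝ z z) y
      (EuclideanSpace.single i 1)) x (EuclideanSpace.single i 1) = 2 := by
    intro i
    rw [h1 i]
    have h3 : HasFDerivAt (fun y : E => 2 * y i)
        ((2:ℝ) • (EuclideanSpace.proj (𝕜 := ℝ) i)) x := by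
      have := (EuclideanSpace.proj (𝕜 := ℝ) i).hasFDerivAt (x := x)
      exact this.const_mul 2
    rw [h3.fderiv]
    simp [EuclideanSpace.single_apply]
  rw [Finset.sum_congr rfl fun i _ => h2 i]
  simp [Finset.card_univ]
  ring

lemma second_deriv_nonpos_at_localMax {f : E → ℝ} {s : Set (EuclideanSpace ℝ (Fin d))}
    (hs : IsOpen s) {x : E} (hx : x ∈ s) (hf : ContDiffOn ℝ 2 f s)
    (hmax : IsLocalMax f x) (v : E) :
    fderiv ℝ (fun y => fderiv ℝ f y v) x v ≤ 0 := by
  by_contra hA'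
  push_neg at hA'
  set c : ℝ → E := fun t => x + t • v with hc
  have hc0 : c 0 = x := by simp [hc]
  have hcd : ∀ t : ℝ, HasDerivAt c v t := by
    intro t
    simpa [hc] using ((hasDerivAt_id t).smul_const v).const_add x
  set G : ℝ → ℝ := fun t => f (c t) with hG
  set G1 : ℝ → ℝ := fun t => fderiv ℝ f (c t) v with hG1
  have hccont : Continuous c := by fun_prop
  have htend : Filter.Tendsto c (nhds 0) (nhds x) := by
    rw [← hc0]; exact hccont.continuousAt
  have hev : ∀ᶠ t in nhds (0:ℝ), c t ∈ s ∧ f (c t) ≤ f x :=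
    (htend.eventually (hs.eventually_mem hx)).and (htend.eventually hmax)
  obtain ⟨δ, hδpos, hδ⟩ := Metric.eventually_nhds_iff.mp hev
  have hδ' : ∀ t : ℝ, |t| < δ → c t ∈ s ∧ f (c t) ≤ f x := by
    intro t ht
    exact hδ (by simpa [Real.dist_eq] using ht)
  -- derivative of G
  have hG' : ∀ t : ℝ, |t| < δ → HasDerivAt G (G1 t) t := by
    intro t ht
    have hd : DifferentiableAt ℝ f (c t) :=
      (hf.contDiffAt (hs.mem_nhds (hδ' t ht).1)).differentiableAt two_ne_zero
    exact hd.hasFDerivAt.comp_hasDerivAt t (hcd t)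
  -- second derivative
  have hG1' : HasDerivAt G1 (fderiv ℝ (fun y => fderiv ℝ f y v) x v) 0 := by
    have hd1 : DifferentiableAt ℝ (fun y => fderiv ℝ f y v) x :=
      diffAt_fderiv_apply hs hf hx v
    have h0 : HasFDerivAt (fun y => fderiv ℝ f y v)
        (fderiv ℝ (fun y => fderiv ℝ f y v) x) (c 0) := by
      rw [hc0]; exact hd1.hasFDerivAt
    have := h0.comp_hasDerivAt 0 (hcd 0)
    exact this
  -- G has a local max at 0
  have hlocmax : IsLocalMax G 0 := by
    filter_upwards [hev] with t ht using by simpa [hG, hc0] using ht.2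
  have hG10 : G1 0 = 0 := by
    have h1 : deriv G 0 = 0 := hlocmax.deriv_eq_zero
    have h2 : deriv G 0 = G1 0 := (hG' 0 (by simpa using hδpos)).deriv
    rw [← h2, h1]
  -- slope of G1 tends to positive limit
  have hslope := hasDerivAt_iff_tendsto_slope.mp hG1'
  have hev2 : ∀ᶠ t in nhdsWithin (0:ℝ) (Set.Ioi 0),
      0 < slope G1 0 t ∧ |t| < δ := by
    have e1 : ∀ᶠ t in nhdsWithin (0:ℝ) {(0:ℝ)}ᶜ, 0 < slope G1 0 t :=
      hslope.eventually (eventually_gt_nhds hA')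
    have e1' : ∀ᶠ t in nhdsWithin (0:ℝ) (Set.Ioi 0), 0 < slope G1 0 t :=
      Filter.Eventually.filter_mono (nhdsWithin_mono 0 (fun t ht => ne_of_gt ht)) e1
    have e2 : ∀ᶠ t in nhdsWithin (0:ℝ) (Set.Ioi 0), |t| < δ := by
      apply Filter.Eventually.filter_mono nhdsWithin_le_nhds
      have : ∀ᶠ t in nhds (0:ℝ), dist t 0 < δ := Metric.ball_mem_nhds 0 hδpos
      filter_upwards [this] with t ht using by simpa [Real.dist_eq] using ht
    exact e1'.and e2
  obtain ⟨ε, hε, hIoo⟩ := mem_nhdsGT_iff_exists_Ioo_subset.mp hev2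
  have hεpos : (0:ℝ) < ε := hε
  -- G1 positive on Ioo 0 ε
  have hG1pos : ∀ t ∈ Set.Ioo (0:ℝ) ε, 0 < G1 t ∧ |t| < δ := by
    intro t ht
    have h := hIoo ht
    have hsl : 0 < slope G1 0 t := h.1
    rw [slope_def_field, hG10] at hsl
    constructor
    · have : G1 t = (G1 t - 0) / (t - 0) * (t - 0) := by
        rw [sub_zero, sub_zero, div_mul_cancel₀]
        exact ne_of_gt ht.1
      rw [this]
      exact mul_pos hsl (by simpa using ht.1)
    · exact h.2
  set b : ℝ := ε / 2 with hb
  have hbIoo : b ∈ Set.Ioo (0:ℝ) ε := ⟨by positivity, by simp [hb]; linarith⟩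
  have hIccsub : ∀ t ∈ Set.Icc (0:ℝ) b, |t| < δ := by
    intro t ht
    rcases eq_or_lt_of_le ht.1 with h0 | h0
    · simpa [← h0] using hδpos
    · exact (hG1pos t ⟨h0, lt_of_le_of_lt ht.2 hbIoo.2⟩).2
  have hGd : ∀ t ∈ Set.Icc (0:ℝ) b, HasDerivAt G (G1 t) t := fun t ht => hG' t (hIccsub t ht)
  have hmono : StrictMonoOn G (Set.Icc (0:ℝ) b) := by
    apply strictMonoOn_of_deriv_pos (convex_Icc 0 b)
    · exact fun t ht => (hGd t ht).continuousAt.continuousWithinAt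
    · intro t ht
      rw [interior_Icc] at ht
      rw [(hGd t ⟨le_of_lt ht.1, le_of_lt ht.2⟩).deriv]
      exact (hG1pos t ⟨ht.1, lt_of_lt_of_le ht.2 (by linarith [hbIoo.2])⟩).1
  have hlt : G 0 < G b := hmono (Set.left_mem_Icc.mpr (le_of_lt hbIoo.1))
    (Set.right_mem_Icc.mpr (le_of_lt hbIoo.1)) hbIoo.1
  have : G b ≤ G 0 := by
    have := (hδ' b (hIccsub b (Set.right_mem_Icc.mpr (le_of_lt hbIoo.1)))).2
    simpa [hG, hc0] using this
  linarith

lemma max_principle (hd : 1 ≤ d) {R : ℝ} (hR : 0 < R) {w : E → ℝ}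
    (hw : ContinuousOn w (closedBall 0 R)) (hw2 : ContDiffOn ℝ 2 w (ball 0 R))
    (hlap : ∀ x ∈ ball (0:E) R, 0 ≤ lap w x)
    (hbd : ∀ x : E, ‖x‖ = R → w x ≤ 0) :
    ∀ x ∈ closedBall (0:E) R, w x ≤ 0 := by
  by_contra hcon
  push_neg at hcon
  obtain ⟨x₀, hx₀, hpos⟩ := hcon
  set q : E → ℝ := fun y => inner ℝ y y with hqdef
  have hqnorm : q = fun y : E => ‖y‖ ^ 2 := by
    funext y; exact real_inner_self_eq_norm_sq y
  have hqc : Continuous q := by rw [hqnorm]; fun_prop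
  have hqcd : ContDiff ℝ 2 q := by rw [hqnorm]; exact contDiff_norm_sq ℝ
  set ε : ℝ := w x₀ / (2 * R ^ 2) with hεdef
  have hεpos : 0 < ε := by positivity
  have hεR : ε * R ^ 2 = w x₀ / 2 := by
    rw [hεdef]; field_simp
  set W : E → ℝ := fun y => w y + ε * q y with hWdef
  have hWc : ContinuousOn W (closedBall 0 R) :=
    hw.add ((hqc.const_smul ε).continuousOn)
  have hWcd : ContDiffOn ℝ 2 W (ball 0 R) :=
    hw2.add ((contDiff_const.mul hqcd).contDiffOn)
  obtain ⟨xs, hxsmem, hxsmax⟩ := (isCompact_closedBall (0:E) R).exists_isMaxOn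
    ⟨0, mem_closedBall_self (le_of_lt hR)⟩ hWc
  have hWx₀ : w x₀ ≤ W x₀ := by
    have : (0:ℝ) ≤ q x₀ := real_inner_self_nonneg
    simp only [hWdef]
    nlinarith
  have hWxs : w x₀ ≤ W xs := le_trans hWx₀ (hxsmax hx₀)
  have hxsball : xs ∈ ball (0:E) R := by
    rw [mem_ball_iff_norm, sub_zero]
    rcases lt_or_eq_of_le (by simpa [mem_closedBall_iff_norm, sub_zero] using hxsmem) with h | h
    · exact h
    · exfalso
      have hb : W xs ≤ w x₀ / 2 := by
        have h1 : w xs ≤ 0 := hbd xs h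
        have h2 : q xs = R ^ 2 := by rw [hqnorm]; simp [h]
        simp only [hWdef]
        rw [h2, hεR]
        linarith
      have h3 : w x₀ ≤ w x₀ / 2 := le_trans hWxs hb
      linarith
  have hloc : IsLocalMax W xs :=
    hxsmax.isLocalMax (Filter.mem_of_superset (isOpen_ball.mem_nhds hxsball)
      ball_subset_closedBall)
  have hlapW : lap W xs ≤ 0 := by
    unfold lap
    apply Finset.sum_nonpos
    intro i _
    exact second_deriv_nonpos_at_localMax isOpen_ball hxsball hWcd hloc _
  have hlapW' : lap W xs = lap w xs + ε * (2 * d) := by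
    rw [lap_add isOpen_ball hw2 ((contDiff_const.mul hqcd).contDiffOn) hxsball,
      lap_const_mul isOpen_ball hqcd.contDiffOn hxsball, lap_normSq]
  have hd' : (1:ℝ) ≤ (d:ℝ) := by exact_mod_cast hd
  have := hlap xs hxsball
  nlinarith

noncomputable def Phi {d : ℕ} (x₀ : EuclideanSpace ℝ (Fin d)) (p : ℝ) :
    EuclideanSpace ℝ (Fin d) → ℝ :=
  fun y => (2 + (-2) * ((innerSL ℝ x₀) y)) ^ p

lemma Phi_continuousOn {x₀ : E} (p : ℝ) (hp : 0 < p) :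
    Continuous (Phi x₀ p) := by
  apply Continuous.rpow_const
  · fun_prop
  · exact fun y => Or.inr (le_of_lt hp)

lemma ell_pos {x₀ : E} (hx₀ : ‖x₀‖ = 1) {y : E} (hy : y ∈ ball (0:E) 1) :
    0 < 2 + (-2) * ((innerSL ℝ x₀) y) := by
  have h1 : (innerSL ℝ x₀) y ≤ ‖y‖ := by
    rw [innerSL_apply_apply]
    calc inner ℝ x₀ y ≤ ‖x₀‖ * ‖y‖ := real_inner_le_norm x₀ y
    _ = ‖y‖ := by rw [hx₀, one_mul]
  have h2 : ‖y‖ < 1 := by simpa [mem_ball_iff_norm, sub_zero] using hy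
  nlinarith

lemma ell_nonneg {x₀ : E} (hx₀ : ‖x₀‖ = 1) {y : E} (hy : y ∈ closedBall (0:E) 1) :
    0 ≤ 2 + (-2) * ((innerSL ℝ x₀) y) := by
  have h1 : (innerSL ℝ x₀) y ≤ ‖y‖ := by
    rw [innerSL_apply_apply]
    calc inner ℝ x₀ y ≤ ‖x₀‖ * ‖y‖ := real_inner_le_norm x₀ y
    _ = ‖y‖ := by rw [hx₀, one_mul]
  have h2 : ‖y‖ ≤ 1 := by simpa [mem_closedBall_iff_norm, sub_zero] using hy
  nlinarith

lemma Phi_contDiffOn {x₀ : E} (hx₀ : ‖x₀‖ = 1) (p : ℝ) :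
    ContDiffOn ℝ 2 (Phi x₀ p) (ball (0:E) 1) := by
  intro y hy
  apply ContDiffAt.contDiffWithinAt
  have hℓ : ContDiffAt ℝ 2 (fun y : E => 2 + (-2) * ((innerSL ℝ x₀) y)) y := by
    exact (contDiff_const.add (contDiff_const.mul (innerSL ℝ x₀).contDiff)).contDiffAt
  exact (Real.contDiffAt_rpow_const_of_ne (ne_of_gt (ell_pos hx₀ hy))).comp y hℓ

lemma ell_hasFDerivAt (x₀ : E) (y : E) :
    HasFDerivAt (fun y : E => 2 + (-2) * ((innerSL ℝ x₀) y))
      ((-2 : ℝ) • (innerSL ℝ x₀)) y :=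
  (((innerSL ℝ x₀).hasFDerivAt).const_mul (-2)).const_add 2

lemma Phi_hasFDerivAt {x₀ : E} (hx₀ : ‖x₀‖ = 1) (p : ℝ) {y : E} (hy : y ∈ ball (0:E) 1) :
    HasFDerivAt (Phi x₀ p)
      ((p * (2 + (-2) * ((innerSL ℝ x₀) y)) ^ (p - 1)) • ((-2 : ℝ) • (innerSL ℝ x₀))) y := by
  have h := (Real.hasDerivAt_rpow_const
    (p := p) (Or.inl (ne_of_gt (ell_pos hx₀ hy)))).comp_hasFDerivAt y (ell_hasFDerivAt x₀ y)
  exact h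

lemma Phi_lap_nonpos {x₀ : E} (hx₀ : ‖x₀‖ = 1) {p : ℝ} (hp : 0 < p) (hp1 : p < 1)
    {x : E} (hx : x ∈ ball (0:E) 1) :
    lap (Phi x₀ p) x ≤ 0 := by
  unfold lap
  apply Finset.sum_nonpos
  intro i _
  set v := EuclideanSpace.single (𝕜 := ℝ) i (1 : ℝ) with hv
  set ℓ : E → ℝ := fun y => 2 + (-2) * ((innerSL ℝ x₀) y) with hℓdef
  set D : EuclideanSpace ℝ (Fin d) →L[ℝ] ℝ := (-2 : ℝ) • (innerSL ℝ x₀) with hDdef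
  have hev : (fun y => fderiv ℝ (Phi x₀ p) y v) =ᶠ[nhds x]
      (fun y => p * ℓ y ^ (p - 1) * (D v)) := by
    filter_upwards [isOpen_ball.mem_nhds hx] with y hy
    rw [(Phi_hasFDerivAt hx₀ p hy).fderiv]
    simp only [hDdef, hℓdef, ContinuousLinearMap.coe_smul', Pi.smul_apply, smul_eq_mul]
  have hsecond : HasFDerivAt (fun y => p * ℓ y ^ (p - 1) * (D v))
      ((p * ((p - 1) * ℓ x ^ (p - 1 - 1)) * (D v)) • D) x := by
    have hbase : HasDerivAt (fun t : ℝ => p * t ^ (p - 1) * (D v))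
        (p * ((p - 1) * ℓ x ^ (p - 1 - 1)) * (D v)) (ℓ x) :=
      ((Real.hasDerivAt_rpow_const (p := p - 1)
        (Or.inl (ne_of_gt (ell_pos hx₀ hx)))).const_mul p).mul_const (D v)
    exact hbase.comp_hasFDerivAt x (ell_hasFDerivAt x₀ x)
  rw [hev.fderiv_eq, hsecond.fderiv]
  have hA : (0:ℝ) ≤ ℓ x ^ (p - 1 - 1) := Real.rpow_nonneg (le_of_lt (ell_pos hx₀ hx)) _
  have hsq : (0:ℝ) ≤ (D v) ^ 2 := sq_nonneg _
  have : ((p * ((p - 1) * ℓ x ^ (p - 1 - 1)) * (D v)) • D) v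
      = p * (p - 1) * ℓ x ^ (p - 1 - 1) * (D v) ^ 2 := by
    simp [smul_eq_mul]; ring
  rw [this]
  have hpp : p * (p - 1) ≤ 0 := mul_nonpos_iff.mpr (Or.inl ⟨le_of_lt hp, by linarith⟩)
  have hab : (0:ℝ) ≤ ℓ x ^ (p - 1 - 1) * (D v) ^ 2 := mul_nonneg hA hsq
  nlinarith [mul_nonpos_of_nonpos_of_nonneg hpp hab]

lemma lap_translate {f : E → ℝ} {s : Set (EuclideanSpace ℝ (Fin d))} (hs : IsOpen s)
    (hf : ContDiffOn ℝ 2 f s) (h : E) {x : E} (hx : x + h ∈ s) :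
    lap (fun y => f (y + h)) x = lap f (x + h) := by
  have hopen : IsOpen {y : E | y + h ∈ s} := by
    have : {y : E | y + h ∈ s} = (fun y : E => y + h) ⁻¹' s := rfl
    rw [this]
    exact hs.preimage (by fun_prop)
  unfold lap
  refine Finset.sum_congr rfl fun i _ => ?_
  set v := EuclideanSpace.single (𝕜 := ℝ) i (1 : ℝ)
  have hA1 : ∀ y : E, y + h ∈ s →
      fderiv ℝ (fun z => f (z + h)) y = fderiv ℝ f (y + h) := by
    intro y hy
    have hd : DifferentiableAt ℝ f (y + h) :=
      (hf.contDiffAt (hs.mem_nhds hy)).differentiableAt two_ne_zero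
    have hc : HasFDerivAt (fun z : E => z + h) (ContinuousLinearMap.id ℝ (EuclideanSpace ℝ (Fin d))) y :=
      (hasFDerivAt_id y).add_const h
    have h3 : HasFDerivAt (fun z => f (z + h))
        ((fderiv ℝ f (y + h)).comp (ContinuousLinearMap.id ℝ (EuclideanSpace ℝ (Fin d)))) y :=
      hd.hasFDerivAt.comp y hc
    rw [h3.fderiv]
    ext w
    simp
  have hev : (fun y => fderiv ℝ (fun z => f (z + h)) y v) =ᶠ[nhds x]
      (fun y => (fun z => fderiv ℝ f z v) (y + h)) := by
    filter_upwards [hopen.mem_nhds hx] with y hy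
    rw [hA1 y hy]
  rw [hev.fderiv_eq]
  have hd1 : DifferentiableAt ℝ (fun z => fderiv ℝ f z v) (x + h) :=
    diffAt_fderiv_apply hs hf hx v
  have hc : HasFDerivAt (fun z : E => z + h) (ContinuousLinearMap.id ℝ (EuclideanSpace ℝ (Fin d))) x :=
    (hasFDerivAt_id x).add_const h
  have h2 : HasFDerivAt (fun y => (fun z => fderiv ℝ f z v) (y + h))
      ((fderiv ℝ (fun z => fderiv ℝ f z v) (x + h)).comp
        (ContinuousLinearMap.id ℝ (EuclideanSpace ℝ (Fin d)))) x :=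
    by have := hd1.hasFDerivAt.comp x hc; exact this
  rw [h2.fderiv]
  simp

lemma abs_u_le (hd : 2 ≤ d) {u g : E → ℝ} {Mg : ℝ}
    (hu : ContinuousOn u (closedBall (0:E) 1))
    (husmooth : ContDiffOn ℝ 2 u (ball (0:E) 1))
    (hharm : ∀ x ∈ ball (0:E) 1, lap u x = 0)
    (hbdry : ∀ x : E, ‖x‖ = 1 → u x = g x)
    (hgbd : ∀ x : E, ‖x‖ = 1 → |g x| ≤ Mg) :
    ∀ x ∈ closedBall (0:E) 1, |u x| ≤ Mg := by
  have hd1 : 1 ≤ d := le_trans (by norm_num) hd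
  have h1 : ∀ x ∈ closedBall (0:E) 1, -Mg + u x ≤ 0 := by
    apply max_principle hd1 one_pos (continuousOn_const.fun_add hu)
      (contDiffOn_const.add husmooth)
    · intro x hx
      rw [lap_const_add, hharm x hx]
    · intro x hx
      have h := abs_le.mp (hgbd x hx)
      rw [hbdry x hx]; linarith [h.2]
  have h2 : ∀ x ∈ closedBall (0:E) 1, -Mg + -u x ≤ 0 := by
    apply max_principle hd1 one_pos (continuousOn_const.fun_add hu.fun_neg)
      (contDiffOn_const.add husmooth.neg)
    · intro x hx
      rw [lap_const_add, lap_neg, hharm x hx]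
      norm_num
    · intro x hx
      have h := abs_le.mp (hgbd x hx)
      rw [hbdry x hx]; linarith [h.1]
  intro x hx
  rw [abs_le]
  constructor
  · linarith [h2 x hx]
  · linarith [h1 x hx]

lemma bdry_est (hd : 2 ≤ d) {σ : ℝ} (hσ : 0 < σ) (hσ1 : σ ≤ 1) {u g : E → ℝ} {Kg : ℝ}
    (hKg : 0 ≤ Kg)
    (hu : ContinuousOn u (closedBall (0:E) 1))
    (husmooth : ContDiffOn ℝ 2 u (ball (0:E) 1))
    (hharm : ∀ x ∈ ball (0:E) 1, lap u x = 0)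
    (hbdry : ∀ x : E, ‖x‖ = 1 → u x = g x)
    (hgsemi : ∀ x : E, ‖x‖ = 1 → ∀ y : E, ‖y‖ = 1 → |g x - g y| ≤ Kg * ‖x - y‖ ^ σ)
    {x₀ : E} (hx₀ : ‖x₀‖ = 1) :
    ∀ x ∈ closedBall (0:E) 1, |u x - g x₀| ≤ Kg * (4 * ‖x - x₀‖) ^ (σ / 2) := by
  have hd1 : 1 ≤ d := le_trans (by norm_num) hd
  set p : ℝ := σ / 2 with hpdef
  have hp : 0 < p := by positivity
  have hp1 : p < 1 := by rw [hpdef]; linarith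
  -- On the sphere, Phi equals the σ-power of the distance
  have hsphere : ∀ b : E, ‖b‖ = 1 → Phi x₀ p b = ‖b - x₀‖ ^ σ := by
    intro b hb
    have hℓ : (2:ℝ) + (-2) * ((innerSL ℝ x₀) b) = ‖b - x₀‖ ^ 2 := by
      rw [innerSL_apply_apply, norm_sub_sq_real, hb, hx₀, real_inner_comm]
      ring
    unfold Phi
    rw [hℓ, ← Real.rpow_natCast (‖b - x₀‖) 2, ← Real.rpow_mul (norm_nonneg _)]
    norm_num
    rw [hpdef]; ring_nf
  -- boundary values are dominated
  have hbdval : ∀ sgn : Bool, ∀ b : E, ‖b‖ = 1 →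
      (if sgn then u b - g x₀ else g x₀ - u b) - Kg * Phi x₀ p b ≤ 0 := by
    intro sgn b hb
    have h := abs_le.mp (hgsemi b hb x₀ hx₀)
    rw [hsphere b hb, hbdry b hb]
    cases sgn <;> simp <;> linarith [h.1, h.2]
  have hΦcont := (Phi_continuousOn (x₀ := x₀) p hp)
  have hΦcd := Phi_contDiffOn hx₀ p
  have hΦlap : ∀ x ∈ ball (0:E) 1, lap (Phi x₀ p) x ≤ 0 :=
    fun x hx => Phi_lap_nonpos hx₀ hp hp1 hx
  have hmain : ∀ x ∈ closedBall (0:E) 1,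
      u x - g x₀ ≤ Kg * Phi x₀ p x ∧ g x₀ - u x ≤ Kg * Phi x₀ p x := by
    have hcd2 : ContDiffOn ℝ 2 (fun y : E => -(g x₀) + (-Kg) * Phi x₀ p y) (ball (0:E) 1) :=
      contDiffOn_const.add (contDiffOn_const.mul hΦcd)
    have hct2 : ContinuousOn (fun y : E => -(g x₀) + (-Kg) * Phi x₀ p y) (closedBall (0:E) 1) :=
      continuousOn_const.add (continuousOn_const.mul hΦcont.continuousOn)
    have hlap2 : ∀ x ∈ ball (0:E) 1,
        lap (fun y : E => -(g x₀) + (-Kg) * Phi x₀ p y) x = (-Kg) * lap (Phi x₀ p) x := by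
      intro x hx
      rw [lap_const_add, lap_const_mul isOpen_ball hΦcd hx]
    have h1 : ∀ x ∈ closedBall (0:E) 1, u x + (-(g x₀) + (-Kg) * Phi x₀ p x) ≤ 0 := by
      apply max_principle hd1 one_pos (hu.fun_add hct2) (husmooth.add hcd2)
      · intro x hx
        rw [lap_add isOpen_ball husmooth hcd2 hx, hharm x hx, hlap2 x hx]
        have := hΦlap x hx
        nlinarith
      · intro b hb
        have := hbdval true b hb
        norm_num at this
        linarith
    have hcd2' : ContDiffOn ℝ 2 (fun y : E => g x₀ + (-Kg) * Phi x₀ p y) (ball (0:E) 1) :=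
      contDiffOn_const.add (contDiffOn_const.mul hΦcd)
    have hct2' : ContinuousOn (fun y : E => g x₀ + (-Kg) * Phi x₀ p y) (closedBall (0:E) 1) :=
      continuousOn_const.add (continuousOn_const.mul hΦcont.continuousOn)
    have h2 : ∀ x ∈ closedBall (0:E) 1, -u x + (g x₀ + (-Kg) * Phi x₀ p x) ≤ 0 := by
      apply max_principle hd1 one_pos (hu.fun_neg.fun_add hct2') (husmooth.neg.add hcd2')
      · intro x hx
        rw [lap_add isOpen_ball husmooth.neg hcd2' hx, lap_neg, hharm x hx,
          lap_const_add, lap_const_mul isOpen_ball hΦcd hx]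
        have := hΦlap x hx
        nlinarith
      · intro b hb
        have := hbdval false b hb
        norm_num at this
        linarith
    intro x hx
    exact ⟨by linarith [h1 x hx], by linarith [h2 x hx]⟩
  intro x hx
  have hm := hmain x hx
  have habs : |u x - g x₀| ≤ Kg * Phi x₀ p x := abs_le.mpr ⟨by linarith [hm.2], hm.1⟩
  refine le_trans habs ?_
  apply mul_le_mul_of_nonneg_left _ hKg
  -- Phi x₀ p x ≤ (4‖x - x₀‖)^p
  unfold Phi
  apply Real.rpow_le_rpow (ell_nonneg hx₀ hx) _ (le_of_lt hp)
  have hxle : ‖x‖ ≤ 1 := by simpa [mem_closedBall_iff_norm, sub_zero] using hx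
  have hr2 : ‖x - x₀‖ ≤ 2 := by
    calc ‖x - x₀‖ ≤ ‖x‖ + ‖x₀‖ := norm_sub_le x x₀
    _ ≤ 2 := by rw [hx₀]; linarith
  have hr1 : 1 - ‖x‖ ≤ ‖x - x₀‖ := by
    have := norm_sub_norm_le x₀ x
    rw [hx₀, norm_sub_rev] at this
    linarith
  have hid : (2:ℝ) + (-2) * ((innerSL ℝ x₀) x) = ‖x - x₀‖ ^ 2 + 1 - ‖x‖ ^ 2 := by
    rw [innerSL_apply_apply, norm_sub_sq_real, hx₀, real_inner_comm]
    ring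
  rw [hid]
  nlinarith [norm_nonneg x, norm_nonneg (x - x₀)]

lemma two_est {Kg σ : ℝ} (hKg : 0 ≤ Kg) (hσ : 0 < σ) (hσ1 : σ ≤ 1) {δ a b : ℝ}
    (hδ : 0 ≤ δ) (ha : 0 ≤ a) (ha' : a ≤ δ) (hb : 0 ≤ b) (hb' : b ≤ 2 * δ) :
    Kg * (4 * a) ^ (σ / 2) + Kg * (4 * b) ^ (σ / 2) ≤ 2 * 5 ^ σ * Kg * δ ^ (σ / 2) := by
  set p : ℝ := σ / 2 with hpdef
  have hp : 0 < p := by positivity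
  have h25 : ((25:ℝ)) ^ p = (5:ℝ) ^ σ := by
    have : (25:ℝ) = (5:ℝ) ^ (2:ℕ) := by norm_num
    rw [this, ← Real.rpow_natCast_mul (by norm_num : (0:ℝ) ≤ 5)]
    norm_num
    rw [hpdef]; ring_nf
  have h1 : (4 * a) ^ p ≤ (25:ℝ) ^ p * δ ^ p := by
    rw [← Real.mul_rpow (by norm_num) hδ]
    exact Real.rpow_le_rpow (by linarith) (by linarith) (le_of_lt hp)
  have h2 : (4 * b) ^ p ≤ (25:ℝ) ^ p * δ ^ p := by
    rw [← Real.mul_rpow (by norm_num) hδ]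
    exact Real.rpow_le_rpow (by linarith) (by linarith) (le_of_lt hp)
  calc Kg * (4 * a) ^ p + Kg * (4 * b) ^ p
      ≤ Kg * ((25:ℝ) ^ p * δ ^ p) + Kg * ((25:ℝ) ^ p * δ ^ p) :=
        add_le_add (mul_le_mul_of_nonneg_left h1 hKg) (mul_le_mul_of_nonneg_left h2 hKg)
    _ = 2 * ((25:ℝ) ^ p) * Kg * δ ^ p := by ring
    _ = 2 * 5 ^ σ * Kg * δ ^ p := by rw [h25]

lemma holder_near (hd : 2 ≤ d) {σ : ℝ} (hσ : 0 < σ) (hσ1 : σ ≤ 1) {u g : E → ℝ} {Kg : ℝ}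
    (hKg : 0 ≤ Kg)
    (hu : ContinuousOn u (closedBall (0:E) 1))
    (husmooth : ContDiffOn ℝ 2 u (ball (0:E) 1))
    (hharm : ∀ x ∈ ball (0:E) 1, lap u x = 0)
    (hbdry : ∀ x : E, ‖x‖ = 1 → u x = g x)
    (hgsemi : ∀ x : E, ‖x‖ = 1 → ∀ y : E, ‖y‖ = 1 → |g x - g y| ≤ Kg * ‖x - y‖ ^ σ)
    {y z : E} (hy : y ∈ closedBall (0:E) 1) (hz : z ∈ closedBall (0:E) 1)
    (hδ1 : ‖y - z‖ < 1) (hny : 1 - ‖y - z‖ ≤ ‖y‖) :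
    |u y - u z| ≤ 2 * 5 ^ σ * Kg * ‖y - z‖ ^ (σ / 2) := by
  set δ := ‖y - z‖ with hδdef
  have hδ0 : 0 ≤ δ := norm_nonneg _
  have hyn : 0 < ‖y‖ := by linarith
  have hyle : ‖y‖ ≤ 1 := by simpa [mem_closedBall_iff_norm, sub_zero] using hy
  set ys : E := ‖y‖⁻¹ • y with hysdef
  have hys : ‖ys‖ = 1 := by
    rw [hysdef, norm_smul, Real.norm_eq_abs, abs_of_pos (inv_pos.mpr hyn),
      inv_mul_cancel₀ (ne_of_gt hyn)]
  have hyy : ‖y - ys‖ = 1 - ‖y‖ := by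
    have hexp : y - ys = (1 - ‖y‖⁻¹) • y := by
      rw [sub_smul, one_smul, hysdef]
    have hinvpos : 0 < ‖y‖⁻¹ := inv_pos.mpr hyn
    have hm : ‖y‖⁻¹ * ‖y‖ = 1 := inv_mul_cancel₀ (ne_of_gt hyn)
    have hinv : 1 ≤ ‖y‖⁻¹ := by nlinarith
    rw [hexp, norm_smul, Real.norm_eq_abs, abs_of_nonpos (by linarith), neg_sub, sub_mul,
      inv_mul_cancel₀ (ne_of_gt hyn), one_mul]
  have hb1 := bdry_est hd hσ hσ1 hKg hu husmooth hharm hbdry hgsemi hys y hy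
  have hb2 := bdry_est hd hσ hσ1 hKg hu husmooth hharm hbdry hgsemi hys z hz
  have htri : |u y - u z| ≤ |u y - g ys| + |u z - g ys| := by
    have h := abs_sub_le (u y) (g ys) (u z)
    rw [abs_sub_comm (g ys) (u z)] at h
    exact h
  have hay : ‖y - ys‖ ≤ δ := by rw [hyy]; linarith
  have hbz : ‖z - ys‖ ≤ 2 * δ := by
    calc ‖z - ys‖ = ‖(z - y) + (y - ys)‖ := by rw [sub_add_sub_cancel]
    _ ≤ ‖z - y‖ + ‖y - ys‖ := norm_add_le _ _
    _ = δ + (1 - ‖y‖) := by rw [norm_sub_rev, hyy]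
    _ ≤ 2 * δ := by linarith
  calc |u y - u z| ≤ |u y - g ys| + |u z - g ys| := htri
    _ ≤ Kg * (4 * ‖y - ys‖) ^ (σ / 2) + Kg * (4 * ‖z - ys‖) ^ (σ / 2) := add_le_add hb1 hb2
    _ ≤ 2 * 5 ^ σ * Kg * δ ^ (σ / 2) :=
        two_est hKg hσ hσ1 hδ0 (norm_nonneg _) hay (norm_nonneg _) hbz

lemma holder_interior (hd : 2 ≤ d) {σ : ℝ} (hσ : 0 < σ) (hσ1 : σ ≤ 1) {u g : E → ℝ} {Kg : ℝ}
    (hKg : 0 ≤ Kg)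
    (hu : ContinuousOn u (closedBall (0:E) 1))
    (husmooth : ContDiffOn ℝ 2 u (ball (0:E) 1))
    (hharm : ∀ x ∈ ball (0:E) 1, lap u x = 0)
    (hbdry : ∀ x : E, ‖x‖ = 1 → u x = g x)
    (hgsemi : ∀ x : E, ‖x‖ = 1 → ∀ y : E, ‖y‖ = 1 → |g x - g y| ≤ Kg * ‖x - y‖ ^ σ)
    {y z : E} (hδpos : 0 < ‖y - z‖) (hδ1 : ‖y - z‖ < 1) (hny : ‖y‖ ≤ 1 - ‖y - z‖) :
    |u y - u z| ≤ 2 * 5 ^ σ * Kg * ‖y - z‖ ^ (σ / 2) := by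
  have hd1 : 1 ≤ d := le_trans (by norm_num) hd
  set δ := ‖y - z‖ with hδdef
  set R : ℝ := 1 - δ with hRdef
  have hR : 0 < R := by rw [hRdef]; linarith
  have hR1 : R ≤ 1 := by rw [hRdef]; linarith
  set h : E := z - y with hhdef
  have hhn : ‖h‖ = δ := by rw [hhdef, norm_sub_rev]
  set M : ℝ := 2 * 5 ^ σ * Kg * δ ^ (σ / 2) with hMdef
  -- translate membership facts
  have hmem1 : ∀ x : E, x ∈ closedBall (0:E) R → x + h ∈ closedBall (0:E) 1 := by
    intro x hx
    rw [mem_closedBall_iff_norm, sub_zero]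
    calc ‖x + h‖ ≤ ‖x‖ + ‖h‖ := norm_add_le _ _
    _ ≤ R + δ := by
        have := (mem_closedBall_iff_norm.mp hx)
        rw [sub_zero] at this
        rw [hhn]; linarith
    _ = 1 := by rw [hRdef]; ring
  have hmem1' : ∀ x : E, x ∈ ball (0:E) R → x + h ∈ ball (0:E) 1 := by
    intro x hx
    rw [mem_ball_iff_norm, sub_zero]
    have hxn : ‖x‖ < R := by
      have := mem_ball_iff_norm.mp hx; rwa [sub_zero] at this
    calc ‖x + h‖ ≤ ‖x‖ + ‖h‖ := norm_add_le _ _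
    _ < R + δ := by rw [hhn]; linarith
    _ = 1 := by rw [hRdef]; ring
  have hmem2 : ∀ x : E, x ∈ closedBall (0:E) R → x ∈ closedBall (0:E) 1 :=
    fun x hx => closedBall_subset_closedBall hR1 hx
  have hmem2' : ∀ x : E, x ∈ ball (0:E) R → x ∈ ball (0:E) 1 :=
    fun x hx => ball_subset_ball hR1 hx
  -- regularity of the translate
  have htcd : ContDiffOn ℝ 2 (fun x : E => u (x + h)) (ball (0:E) R) := by
    have := husmooth.comp ((contDiff_id.add contDiff_const).contDiffOn
      (s := ball (0:E) R)) (fun x hx => hmem1' x hx)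
    exact this
  have htct : ContinuousOn (fun x : E => u (x + h)) (closedBall (0:E) R) := by
    have := hu.comp ((continuous_id.add continuous_const).continuousOn
      (s := closedBall (0:E) R)) (fun x hx => hmem1 x hx)
    exact this
  have husR : ContDiffOn ℝ 2 u (ball (0:E) R) := husmooth.mono (ball_subset_ball hR1)
  have huR : ContinuousOn u (closedBall (0:E) R) := hu.mono (closedBall_subset_closedBall hR1)
  -- boundary bound for the difference
  have hbound : ∀ x : E, ‖x‖ = R → |u (x + h) - u x| ≤ M := by
    intro x hx
    have hxcb : x ∈ closedBall (0:E) R := by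
      rw [mem_closedBall_iff_norm, sub_zero, hx]
    set xs : E := R⁻¹ • x with hxsdef
    have hxs : ‖xs‖ = 1 := by
      rw [hxsdef, norm_smul, Real.norm_eq_abs, abs_of_pos (inv_pos.mpr hR), hx,
        inv_mul_cancel₀ (ne_of_gt hR)]
    have hxxs : ‖x - xs‖ = δ := by
      have hexp : x - xs = (1 - R⁻¹) • x := by rw [sub_smul, one_smul, hxsdef]
      have hinvpos : 0 < R⁻¹ := inv_pos.mpr hR
      have hm : R⁻¹ * R = 1 := inv_mul_cancel₀ (ne_of_gt hR)
      have hinv : 1 ≤ R⁻¹ := by nlinarith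
      rw [hexp, norm_smul, Real.norm_eq_abs, abs_of_nonpos (by linarith), neg_sub, sub_mul, hx,
        inv_mul_cancel₀ (ne_of_gt hR), one_mul, hRdef]
      ring
    have hxhxs : ‖x + h - xs‖ ≤ 2 * δ := by
      calc ‖x + h - xs‖ = ‖(x - xs) + h‖ := by rw [sub_add_eq_add_sub]
      _ ≤ ‖x - xs‖ + ‖h‖ := norm_add_le _ _
      _ = δ + δ := by rw [hxxs, hhn]
      _ ≤ 2 * δ := by linarith
    have hb1 := bdry_est hd hσ hσ1 hKg hu husmooth hharm hbdry hgsemi hxs (x + h) (hmem1 x hxcb)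
    have hb2 := bdry_est hd hσ hσ1 hKg hu husmooth hharm hbdry hgsemi hxs x (hmem2 x hxcb)
    have htri : |u (x + h) - u x| ≤ |u x - g xs| + |u (x + h) - g xs| := by
      have h' := abs_sub_le (u (x + h)) (g xs) (u x)
      rw [abs_sub_comm (g xs) (u x)] at h'
      linarith
    calc |u (x + h) - u x| ≤ |u x - g xs| + |u (x + h) - g xs| := htri
      _ ≤ Kg * (4 * ‖x - xs‖) ^ (σ / 2) + Kg * (4 * ‖x + h - xs‖) ^ (σ / 2) := add_le_add hb2 hb1
      _ ≤ 2 * 5 ^ σ * Kg * δ ^ (σ / 2) :=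
          two_est hKg hσ hσ1 (le_of_lt hδpos) (norm_nonneg _) (le_of_eq hxxs)
            (norm_nonneg _) hxhxs
  -- maximum principle for the two differences
  have hyR : y ∈ closedBall (0:E) R := by
    rw [mem_closedBall_iff_norm, sub_zero]; exact hny
  have hyh : y + h = z := by rw [hhdef]; abel
  have h1 : ∀ x ∈ closedBall (0:E) R, u (x + h) + (-M + (-1) * u x) ≤ 0 := by
    apply max_principle hd1 hR (htct.fun_add (continuousOn_const.fun_add (continuousOn_const.fun_mul huR)))
      (htcd.add (contDiffOn_const.add (contDiffOn_const.mul husR)))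
    · intro x hx
      rw [lap_add isOpen_ball htcd (contDiffOn_const.add (contDiffOn_const.mul husR)) hx,
        lap_const_add, lap_const_mul isOpen_ball husR hx,
        lap_translate isOpen_ball husmooth h (hmem1' x hx), hharm _ (hmem1' x hx),
        hharm _ (hmem2' x hx)]
      norm_num
    · intro b hb
      have := abs_le.mp (hbound b hb)
      linarith [this.2]
  have h2 : ∀ x ∈ closedBall (0:E) R, u x + (-M + (-1) * u (x + h)) ≤ 0 := by
    apply max_principle hd1 hR (huR.fun_add (continuousOn_const.fun_add (continuousOn_const.fun_mul htct)))
      (husR.add (contDiffOn_const.add (contDiffOn_const.mul htcd)))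
    · intro x hx
      rw [lap_add isOpen_ball husR (contDiffOn_const.add (contDiffOn_const.mul htcd)) hx,
        lap_const_add, lap_const_mul isOpen_ball htcd hx,
        lap_translate isOpen_ball husmooth h (hmem1' x hx), hharm _ (hmem1' x hx),
        hharm _ (hmem2' x hx)]
      norm_num
    · intro b hb
      have := abs_le.mp (hbound b hb)
      linarith [this.1]
  have ha := h1 y hyR
  have hb := h2 y hyR
  rw [hyh] at ha hb
  rw [abs_le]
  constructor
  · linarith
  · linarith

/-- Proposition 2.1: quantified global Hölder regularity for the harmonic extension of
Hölder boundary data on the unit ball. -/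
theorem harmonic_extension_global_holder {d : ℕ} (hd : 2 ≤ d)
    (σ : ℝ) (hσ : 0 < σ) (hσ1 : σ ≤ 1)
    (u g : EuclideanSpace ℝ (Fin d) → ℝ)
    (hu : ContinuousOn u (closedBall (0 : EuclideanSpace ℝ (Fin d)) 1))
    (husmooth : ContDiffOn ℝ 2 u (ball (0 : EuclideanSpace ℝ (Fin d)) 1))
    (hharm : ∀ x ∈ ball (0 : EuclideanSpace ℝ (Fin d)) 1, lap u x = 0)
    (hbdry : ∀ x : EuclideanSpace ℝ (Fin d), ‖x‖ = 1 → u x = g x)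
    (Mg Kg : ℝ) (hMg : 0 ≤ Mg) (hKg : 0 ≤ Kg)
    (hgbd : ∀ x : EuclideanSpace ℝ (Fin d), ‖x‖ = 1 → |g x| ≤ Mg)
    (hgsemi : ∀ x : EuclideanSpace ℝ (Fin d), ‖x‖ = 1 →
      ∀ y : EuclideanSpace ℝ (Fin d), ‖y‖ = 1 → |g x - g y| ≤ Kg * ‖x - y‖ ^ σ) :
    ∀ x ∈ closedBall (0 : EuclideanSpace ℝ (Fin d)) 1,
      ∀ y ∈ closedBall (0 : EuclideanSpace ℝ (Fin d)) 1,
        ∀ z ∈ closedBall (0 : EuclideanSpace ℝ (Fin d)) 1,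
          y ≠ z →
            |u x| + |u y - u z| / ‖y - z‖ ^ (σ / 2) ≤
              2 * d * 5 ^ σ * (Mg + Kg) := by
  intro x hx y hy z hz hyz
  have hub := abs_u_le hd hu husmooth hharm hbdry hgbd
  have hδpos : 0 < ‖y - z‖ := by
    rw [norm_pos_iff]; exact sub_ne_zero_of_ne hyz
  set δ := ‖y - z‖ with hδdef
  set p : ℝ := σ / 2 with hpdef
  have hp : 0 < p := by positivity
  have hδp : 0 < δ ^ p := Real.rpow_pos_of_pos hδpos p
  have hH : |u y - u z| ≤ (2 * Mg + 2 * 5 ^ σ * Kg) * δ ^ p := by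
    rcases lt_or_ge δ 1 with hδ1 | hδ1
    · rcases le_or_gt ‖y‖ (1 - δ) with hcase | hcase
      · have h := holder_interior hd hσ hσ1 hKg hu husmooth hharm hbdry hgsemi hδpos hδ1 hcase
        nlinarith [mul_nonneg (mul_nonneg (by norm_num : (0:ℝ) ≤ 2) hMg) (le_of_lt hδp)]
      · have h := holder_near hd hσ hσ1 hKg hu husmooth hharm hbdry hgsemi hy hz hδ1
          (by linarith)
        nlinarith [mul_nonneg (mul_nonneg (by norm_num : (0:ℝ) ≤ 2) hMg) (le_of_lt hδp)]
    · have h2 : |u y - u z| ≤ 2 * Mg := by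
        have h3 := hub y hy
        have h4 := hub z hz
        have h5 : |u y - u z| ≤ |u y| + |u z| := by
          rw [sub_eq_add_neg]
          refine (abs_add_le _ _).trans ?_
          rw [abs_neg]
        linarith
      have h5 : (1:ℝ) ≤ δ ^ p := Real.one_le_rpow hδ1 (le_of_lt hp)
      have h6 : (0:ℝ) ≤ 5 ^ σ := Real.rpow_nonneg (by norm_num) σ
      nlinarith [mul_nonneg (mul_nonneg (mul_nonneg (by norm_num : (0:ℝ) ≤ 2) h6) hKg)
        (le_of_lt hδp)]
  have hx' := hub x hx
  have hdiv : |u y - u z| / δ ^ p ≤ 2 * Mg + 2 * 5 ^ σ * Kg := by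
    rw [div_le_iff₀ hδp]; exact hH
  have h5σ : (1:ℝ) ≤ 5 ^ σ := Real.one_le_rpow (by norm_num) (le_of_lt hσ)
  have hd2 : (2:ℝ) ≤ (d:ℝ) := by exact_mod_cast hd
  have hDs : (4:ℝ) ≤ 2 * (d:ℝ) * 5 ^ σ := by nlinarith
  have key : 3 * Mg + 2 * 5 ^ σ * Kg ≤ 2 * (d:ℝ) * 5 ^ σ * (Mg + Kg) := by
    nlinarith [mul_nonneg hMg (by linarith : (0:ℝ) ≤ 2 * (d:ℝ) * 5 ^ σ - 3),
      mul_nonneg hKg (by nlinarith : (0:ℝ) ≤ 2 * (d:ℝ) * 5 ^ σ - 2 * 5 ^ σ)]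
  linarith
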